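/- Let U be a bounded smooth domain in ℝ³ = ℂ×ℝ whose closure does not contain the origin, let a ∈ ℝ and let f : ℝ → ℝ be continuous. (i) If v ∈ C²(U) ∩ C(closure U) satisfies −Δv(x) + (a/(4|x|))v(x) = (1/(4|x|))f(v(x)) for all x ∈ U and v = 0 on ∂U, then u := v ∘ π belongs to C²(Ω) ∩ C(closure Ω), where Ω := π^{−1}(U), and satisfies −Δu + au = f(u) in Ω and u = 0 on ∂Ω. (ii) Conversely, if v : U → ℝ is of class C² and u := v ∘ π satisfies −Δu + au = f(u) in Ω, then v satisfies −Δv + (a/(4|x|))v = (1/(4|x|))f(v) in U. -/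

import Mathlib

/-- The Laplacian (trace of the second derivative) of a real-valued function on a
finite-dimensional Euclidean space, computed in the standard orthonormal coordinates. -/
noncomputable def lap {ι : Type*} [Fintype ι] [DecidableEq ι]
    (u : EuclideanSpace ℝ ι → ℝ) (x : EuclideanSpace ℝ ι) : ℝ :=
  ∑ i, iteratedFDeriv ℝ 2 u x ![EuclideanSpace.single i 1, EuclideanSpace.single i 1]

/-- A bounded smooth domain: a nonempty bounded open set, each of whose boundary points
admits a smooth local defining function with nonvanishing differential (so that the
boundary is a C^∞ hypersurface). -/
structure IsSmoothDomain {E : Type*} [NormedAddCommGroup E] [NormedSpace ℝ E]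
    (Ω : Set E) : Prop where
  isOpen : IsOpen Ω
  isBounded : Bornology.IsBounded Ω
  nonempty : Ω.Nonempty
  smooth_boundary : ∀ x ∈ frontier Ω, ∃ f : E → ℝ, ContDiff ℝ (⊤ : ℕ∞) f ∧
    fderiv ℝ f x ≠ 0 ∧ ∀ᶠ y in nhds x, (y ∈ Ω ↔ f y < 0)

/-- The Hopf map π : ℝ⁴ = ℂ×ℂ → ℝ³ = ℂ×ℝ, π(z₁,z₂) = (2·conj(z₁)·z₂, |z₁|² − |z₂|²),
in real coordinates (z₁ = x₀ + i x₁, z₂ = x₂ + i x₃). -/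
noncomputable def hopfC (x : EuclideanSpace ℝ (Fin 4)) : EuclideanSpace ℝ (Fin 3) :=
  WithLp.toLp 2 (![(2 * (starRingEnd ℂ) (⟨x 0, x 1⟩ : ℂ) * (⟨x 2, x 3⟩ : ℂ)).re,
    (2 * (starRingEnd ℂ) (⟨x 0, x 1⟩ : ℂ) * (⟨x 2, x 3⟩ : ℂ)).im,
    ‖(⟨x 0, x 1⟩ : ℂ)‖ ^ 2 - ‖(⟨x 2, x 3⟩ : ℂ)‖ ^ 2])

noncomputable section HopfAux

abbrev E4 := EuclideanSpace ℝ (Fin 4)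
abbrev E3 := EuclideanSpace ℝ (Fin 3)

lemma hopfC_apply0 (x : E4) : hopfC x 0 = 2*(x 0 * x 2 + x 1 * x 3) := by
  show (WithLp.toLp 2 ![_,_,_] : E3) 0 = _
  simp [hopfC, Complex.mul_re, Complex.mul_im]
  ring

lemma hopfC_apply1 (x : E4) : hopfC x 1 = 2*(x 0 * x 3 - x 1 * x 2) := by
  show (WithLp.toLp 2 ![_,_,_] : E3) 1 = _
  simp [hopfC, Complex.mul_re, Complex.mul_im]
  ring

lemma hopfC_apply2 (x : E4) : hopfC x 2 = x 0^2 + x 1^2 - x 2^2 - x 3^2 := by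
  show (WithLp.toLp 2 ![_,_,_] : E3) 2 = _
  simp [hopfC, Complex.sq_norm, Complex.normSq_mk]
  ring

def lin (c : Fin 4 → ℝ) : E4 →L[ℝ] ℝ :=
  ∑ i, c i • (EuclideanSpace.proj i : E4 →L[ℝ] ℝ)

lemma lin_apply (c : Fin 4 → ℝ) (h : E4) : lin c h = ∑ i, c i * h i := by
  simp [lin]

def grad (x : E4) : Fin 3 → Fin 4 → ℝ :=
  ![![2*x 2, 2*x 3, 2*x 0, 2*x 1],
    ![2*x 3, -(2*x 2), -(2*x 1), 2*x 0],
    ![2*x 0, 2*x 1, -(2*x 2), -(2*x 3)]]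

def DH (x : E4) : E4 →L[ℝ] E3 :=
  ((EuclideanSpace.equiv (Fin 3) ℝ).symm : (Fin 3 → ℝ) ≃L[ℝ] E3).toContinuousLinearMap.comp
    (ContinuousLinearMap.pi (fun k => lin (grad x k)))

lemma DH_apply (x h : E4) (k : Fin 3) : DH x h k = ∑ i, grad x k i * h i := by
  simp [DH, lin_apply]

lemma hasFDerivAt_hopfC (x : E4) : HasFDerivAt hopfC (DH x) x := by
  have hp : ∀ i : Fin 4, HasFDerivAt (fun y : E4 => y i)
      (EuclideanSpace.proj i : E4 →L[ℝ] ℝ) x := by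
    intro i
    have h := (EuclideanSpace.proj i : E4 →L[ℝ] ℝ).hasFDerivAt (x := x)
    exact h.congr_of_eventuallyEq (Filter.Eventually.of_forall fun y => by simp)
  have h0 : HasFDerivAt (fun y : E4 => hopfC y 0) (lin (grad x 0)) x := by
    have h : HasFDerivAt (fun y : E4 => 2*(y 0 * y 2 + y 1 * y 3)) (lin (grad x 0)) x := by
      have := (((hp 0).mul (hp 2)).add ((hp 1).mul (hp 3))).const_mul (2:ℝ)
      refine this.congr_fderiv ?_
      apply ContinuousLinearMap.ext; intro h
      simp [lin_apply, Fin.sum_univ_four, grad]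
      try ring
    exact h.congr_of_eventuallyEq (Filter.Eventually.of_forall fun y => hopfC_apply0 y)
  have h1 : HasFDerivAt (fun y : E4 => hopfC y 1) (lin (grad x 1)) x := by
    have h : HasFDerivAt (fun y : E4 => 2*(y 0 * y 3 - y 1 * y 2)) (lin (grad x 1)) x := by
      have := (((hp 0).mul (hp 3)).sub ((hp 1).mul (hp 2))).const_mul (2:ℝ)
      refine this.congr_fderiv ?_
      apply ContinuousLinearMap.ext; intro h
      simp [lin_apply, Fin.sum_univ_four, grad]
      try ring
    exact h.congr_of_eventuallyEq (Filter.Eventually.of_forall fun y => hopfC_apply1 y)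
  have h2 : HasFDerivAt (fun y : E4 => hopfC y 2) (lin (grad x 2)) x := by
    have h : HasFDerivAt (fun y : E4 => y 0^2 + y 1^2 - y 2^2 - y 3^2) (lin (grad x 2)) x := by
      have := ((((hp 0).mul (hp 0)).add ((hp 1).mul (hp 1))).sub
        ((hp 2).mul (hp 2))).sub ((hp 3).mul (hp 3))
      refine (this.congr_fderiv ?_).congr_of_eventuallyEq (Filter.Eventually.of_forall fun y => by
        simp only [Pi.mul_apply, Pi.add_apply, Pi.sub_apply]; ring)
      apply ContinuousLinearMap.ext; intro h
      simp [lin_apply, Fin.sum_univ_four, grad]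
      try ring
    exact h.congr_of_eventuallyEq (Filter.Eventually.of_forall fun y => hopfC_apply2 y)
  have hpi : HasFDerivAt (fun y : E4 => (fun k : Fin 3 => hopfC y k))
      (ContinuousLinearMap.pi (fun k => lin (grad x k))) x := by
    apply hasFDerivAt_pi.2
    intro k
    fin_cases k
    · exact h0
    · exact h1
    · exact h2
  exact (((EuclideanSpace.equiv (Fin 3) ℝ).symm :
      (Fin 3 → ℝ) ≃L[ℝ] E3).hasFDerivAt).comp x hpi

lemma norm_sq4 (z : E4) : ‖z‖^2 = z 0^2 + z 1^2 + z 2^2 + z 3^2 := by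
  rw [EuclideanSpace.norm_eq, Real.sq_sqrt (by positivity)]
  simp [Fin.sum_univ_four, sq_abs]

lemma norm_hopfC (z : E4) : ‖hopfC z‖ = ‖z‖^2 := by
  rw [EuclideanSpace.norm_eq]
  have : ∑ i : Fin 3, ‖hopfC z i‖^2 = (‖z‖^2)^2 := by
    rw [Fin.sum_univ_three, norm_sq4]
    simp only [Real.norm_eq_abs, sq_abs, hopfC_apply0, hopfC_apply1, hopfC_apply2]
    ring
  rw [this, Real.sqrt_sq (by positivity)]

def DHlin : E4 →ₗ[ℝ] (E4 →L[ℝ] E3) where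
  toFun := DH
  map_add' x y := by
    apply ContinuousLinearMap.ext; intro h
    apply (EuclideanSpace.basisFun (Fin 3) ℝ).toBasis.ext_elem_iff.2
    intro k
    simp only [ContinuousLinearMap.add_apply, Module.Basis.repr_self_apply]
    fin_cases k <;>
      simp [DH_apply, grad, Fin.sum_univ_four, PiLp.add_apply,
        OrthonormalBasis.coe_toBasis_repr_apply, EuclideanSpace.basisFun_repr] <;> ring
  map_smul' c x := by
    apply ContinuousLinearMap.ext; intro h
    apply (EuclideanSpace.basisFun (Fin 3) ℝ).toBasis.ext_elem_iff.2
    intro k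
    simp only [ContinuousLinearMap.smul_apply, RingHom.id_apply, Module.Basis.repr_self_apply]
    fin_cases k <;>
      simp [DH_apply, grad, Fin.sum_univ_four, PiLp.smul_apply,
        OrthonormalBasis.coe_toBasis_repr_apply, EuclideanSpace.basisFun_repr,
        smul_eq_mul] <;> ring

def DHclm : E4 →L[ℝ] E4 →L[ℝ] E3 := LinearMap.toContinuousLinearMap DHlin

lemma hasFDerivAt_DH (x : E4) : HasFDerivAt DH DHclm x := by
  have h := DHclm.hasFDerivAt (x := x)
  exact h.congr_of_eventuallyEq (Filter.Eventually.of_forall fun y => by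
    simp [DHclm, DHlin])

lemma hsingle (T : E3 →L[ℝ] ℝ) (w : E3) :
    T w = w 0 * T (EuclideanSpace.single 0 1) + w 1 * T (EuclideanSpace.single 1 1)
      + w 2 * T (EuclideanSpace.single 2 1) := by
  have hw : w = w 0 • EuclideanSpace.single (0 : Fin 3) 1
      + w 1 • EuclideanSpace.single (1 : Fin 3) 1
      + w 2 • EuclideanSpace.single (2 : Fin 3) 1 := by
    have := (EuclideanSpace.basisFun (Fin 3) ℝ).sum_repr w
    rw [Fin.sum_univ_three] at this
    simpa [EuclideanSpace.basisFun_apply, EuclideanSpace.basisFun_repr] using this.symm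
  conv_lhs => rw [hw]
  simp [smul_eq_mul]

lemma hB2 (B : E3 →L[ℝ] E3 →L[ℝ] ℝ) (w w' : E3) :
    B w w' = ∑ k : Fin 3, ∑ l : Fin 3,
      w k * w' l * B (EuclideanSpace.single k 1) (EuclideanSpace.single l 1) := by
  rw [hsingle (B w) w']
  have h0 := hsingle (B.flip (EuclideanSpace.single 0 1)) w
  have h1 := hsingle (B.flip (EuclideanSpace.single 1 1)) w
  have h2 := hsingle (B.flip (EuclideanSpace.single 2 1)) w
  simp only [ContinuousLinearMap.flip_apply] at h0 h1 h2
  rw [h0, h1, h2, Fin.sum_univ_three]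
  simp only [Fin.sum_univ_three]
  ring


lemma lap_comp (v : E3 → ℝ) (U : Set E3) (hU : IsOpen U) (hv : ContDiffOn ℝ 2 v U)
    (z : E4) (hz : hopfC z ∈ U) :
    lap (v ∘ hopfC) z = (4 * ‖z‖^2) * lap v (hopfC z) := by
  have hmem : U ∈ nhds (hopfC z) := hU.mem_nhds hz
  have hvx : ContDiffAt ℝ 2 v (hopfC z) := hv.contDiffAt hmem
  have hv1 : ContDiffAt ℝ 1 (fderiv ℝ v) (hopfC z) := hvx.fderiv_right (by norm_num)
  have hdv : ∀ᶠ y in nhds z, DifferentiableAt ℝ v (hopfC y) := by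
    have hc : ContinuousAt hopfC z := (hasFDerivAt_hopfC z).differentiableAt.continuousAt
    filter_upwards [hc.preimage_mem_nhds hmem] with y hy
    exact (hv.contDiffAt (hU.mem_nhds hy)).differentiableAt two_ne_zero
  have heq : fderiv ℝ (v ∘ hopfC) =ᶠ[nhds z] fun y => (fderiv ℝ v (hopfC y)).comp (DH y) := by
    filter_upwards [hdv] with y hy
    rw [fderiv_comp y hy (hasFDerivAt_hopfC y).differentiableAt, (hasFDerivAt_hopfC y).fderiv]
  have hcdiff : DifferentiableAt ℝ (fun y => fderiv ℝ v (hopfC y)) z :=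
    (hv1.differentiableAt one_ne_zero).comp z (hasFDerivAt_hopfC z).differentiableAt
  have hddiff : DifferentiableAt ℝ (fun y : E4 => DH y) z := (hasFDerivAt_DH z).differentiableAt
  have hBc : HasFDerivAt (fun y => fderiv ℝ v (hopfC y))
      ((fderiv ℝ (fderiv ℝ v) (hopfC z)).comp (DH z)) z :=
    HasFDerivAt.comp z (hv1.differentiableAt one_ne_zero).hasFDerivAt (hasFDerivAt_hopfC z)
  have key : ∀ e : E4, fderiv ℝ (fderiv ℝ (v ∘ hopfC)) z e e
      = fderiv ℝ v (hopfC z) (DH e e)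
        + fderiv ℝ (fderiv ℝ v) (hopfC z) (DH z e) (DH z e) := by
    intro e
    rw [heq.fderiv_eq, fderiv_clm_comp hcdiff hddiff, hBc.fderiv, (hasFDerivAt_DH z).fderiv]
    simp [DHclm, DHlin]
  simp only [lap, iteratedFDeriv_two_apply, Matrix.cons_val_zero, Matrix.cons_val_one,
    Matrix.head_cons]
  simp only [key]
  rw [Fin.sum_univ_four, Fin.sum_univ_three]
  rw [hB2 (fderiv ℝ (fderiv ℝ v) (hopfC z)) (DH z (EuclideanSpace.single 0 1))
      (DH z (EuclideanSpace.single 0 1)),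
    hB2 (fderiv ℝ (fderiv ℝ v) (hopfC z)) (DH z (EuclideanSpace.single 1 1))
      (DH z (EuclideanSpace.single 1 1)),
    hB2 (fderiv ℝ (fderiv ℝ v) (hopfC z)) (DH z (EuclideanSpace.single 2 1))
      (DH z (EuclideanSpace.single 2 1)),
    hB2 (fderiv ℝ (fderiv ℝ v) (hopfC z)) (DH z (EuclideanSpace.single 3 1))
      (DH z (EuclideanSpace.single 3 1)),
    hsingle (fderiv ℝ v (hopfC z)) (DH (EuclideanSpace.single 0 1) (EuclideanSpace.single 0 1)),
    hsingle (fderiv ℝ v (hopfC z)) (DH (EuclideanSpace.single 1 1) (EuclideanSpace.single 1 1)),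
    hsingle (fderiv ℝ v (hopfC z)) (DH (EuclideanSpace.single 2 1) (EuclideanSpace.single 2 1)),
    hsingle (fderiv ℝ v (hopfC z)) (DH (EuclideanSpace.single 3 1) (EuclideanSpace.single 3 1))]
  simp only [Fin.sum_univ_three]
  simp [DH_apply, grad, Fin.sum_univ_four, EuclideanSpace.single_apply]
  rw [norm_sq4]
  ring

lemma euclid_ext {n : ℕ} (x y : EuclideanSpace ℝ (Fin n)) (h : ∀ i, x i = y i) : x = y :=
  PiLp.ext h

lemma hopfC_surjective : Function.Surjective hopfC := by
  intro y
  have hρnn : (0:ℝ) ≤ Real.sqrt (y 0^2 + y 1^2 + y 2^2) := Real.sqrt_nonneg _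
  set ρ := Real.sqrt (y 0^2 + y 1^2 + y 2^2) with hρdef
  have hρ : ρ^2 = y 0^2 + y 1^2 + y 2^2 := Real.sq_sqrt (by positivity)
  have htle : |y 2| ≤ ρ := by
    rw [← Real.sqrt_sq_eq_abs]
    apply Real.sqrt_le_sqrt
    nlinarith [sq_nonneg (y 0), sq_nonneg (y 1)]
  have habs := abs_le.1 htle
  by_cases hcase : 0 < ρ + y 2
  · have hs2 : (Real.sqrt ((ρ + y 2)/2))^2 = (ρ + y 2)/2 := Real.sq_sqrt (by linarith)
    set s := Real.sqrt ((ρ + y 2)/2) with hsdef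
    have hspos : 0 < s := Real.sqrt_pos.2 (by linarith)
    refine ⟨(WithLp.equiv 2 (Fin 4 → ℝ)).symm ![s, 0, y 0/(2*s), y 1/(2*s)], ?_⟩
    have hy01 : y 0^2 + y 1^2 = (ρ + y 2)*(ρ - y 2) := by nlinarith
    apply euclid_ext
    intro k
    fin_cases k
    · show hopfC _ 0 = y 0
      rw [hopfC_apply0]
      simp only [WithLp.equiv_symm_apply, PiLp.toLp_apply, Matrix.cons_val_zero, Matrix.cons_val_one,
        Matrix.head_cons, Matrix.cons_val_two, Matrix.tail_cons, Matrix.cons_val_three]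
      field_simp
      ring
    · show hopfC _ 1 = y 1
      rw [hopfC_apply1]
      simp only [WithLp.equiv_symm_apply, PiLp.toLp_apply, Matrix.cons_val_zero, Matrix.cons_val_one,
        Matrix.head_cons, Matrix.cons_val_two, Matrix.tail_cons, Matrix.cons_val_three]
      field_simp
      ring
    · show hopfC _ 2 = y 2
      rw [hopfC_apply2]
      simp only [WithLp.equiv_symm_apply, PiLp.toLp_apply, Matrix.cons_val_zero, Matrix.cons_val_one,
        Matrix.head_cons, Matrix.cons_val_two, Matrix.tail_cons, Matrix.cons_val_three]
      rw [div_pow, div_pow]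
      rw [show (2*s)^2 = 4 * ((ρ + y 2)/2) from by rw [← hs2]; ring]
      field_simp
      nlinarith
  · have hρt : ρ = -y 2 := by linarith
    have h0 : y 0 = 0 := by nlinarith
    have h1 : y 1 = 0 := by nlinarith
    have hq : (Real.sqrt ρ)^2 = ρ := Real.sq_sqrt hρnn
    refine ⟨(WithLp.equiv 2 (Fin 4 → ℝ)).symm ![0, 0, Real.sqrt ρ, 0], ?_⟩
    apply euclid_ext
    intro k
    fin_cases k
    · show hopfC _ 0 = y 0
      rw [hopfC_apply0]
      simp only [WithLp.equiv_symm_apply, PiLp.toLp_apply, Matrix.cons_val_zero, Matrix.cons_val_one,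
        Matrix.head_cons, Matrix.cons_val_two, Matrix.tail_cons, Matrix.cons_val_three]
      simp [h0]
    · show hopfC _ 1 = y 1
      rw [hopfC_apply1]
      simp only [WithLp.equiv_symm_apply, PiLp.toLp_apply, Matrix.cons_val_zero, Matrix.cons_val_one,
        Matrix.head_cons, Matrix.cons_val_two, Matrix.tail_cons, Matrix.cons_val_three]
      simp [h1]
    · show hopfC _ 2 = y 2
      rw [hopfC_apply2]
      simp only [WithLp.equiv_symm_apply, PiLp.toLp_apply, Matrix.cons_val_zero, Matrix.cons_val_one,
        Matrix.head_cons, Matrix.cons_val_two, Matrix.tail_cons, Matrix.cons_val_three]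
      rw [show (Real.sqrt ρ)^2 = ρ from hq]
      simp [hρt]
      try linarith

lemma contDiff_hopfC : ContDiff ℝ 2 hopfC := by
  have hcoord : ∀ i : Fin 4, ContDiff ℝ 2 (fun x : E4 => x i) := by
    intro i
    have h : (fun x : E4 => x i) = ⇑(EuclideanSpace.proj (𝕜 := ℝ) i) := by
      funext y; simp
    rw [h]; exact ContinuousLinearMap.contDiff _
  have hc : ContDiff ℝ 2 (fun x : E4 => (fun k : Fin 3 => hopfC x k)) := by
    apply contDiff_pi.2
    intro k
    fin_cases k
    · show ContDiff ℝ 2 fun x : E4 => hopfC x 0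
      have h : (fun x : E4 => hopfC x 0) = fun x : E4 => 2*(x 0 * x 2 + x 1 * x 3) :=
        funext hopfC_apply0
      rw [h]
      exact contDiff_const.mul (((hcoord 0).mul (hcoord 2)).add ((hcoord 1).mul (hcoord 3)))
    · show ContDiff ℝ 2 fun x : E4 => hopfC x 1
      have h : (fun x : E4 => hopfC x 1) = fun x : E4 => 2*(x 0 * x 3 - x 1 * x 2) :=
        funext hopfC_apply1
      rw [h]
      exact contDiff_const.mul (((hcoord 0).mul (hcoord 3)).sub ((hcoord 1).mul (hcoord 2)))
    · show ContDiff ℝ 2 fun x : E4 => hopfC x 2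
      have h : (fun x : E4 => hopfC x 2) = fun x : E4 => x 0^2 + x 1^2 - x 2^2 - x 3^2 :=
        funext hopfC_apply2
      rw [h]
      exact ((((hcoord 0).pow 2).add ((hcoord 1).pow 2)).sub ((hcoord 2).pow 2)).sub
        ((hcoord 3).pow 2)
  exact (((EuclideanSpace.equiv (Fin 3) ℝ).symm : (Fin 3 → ℝ) ≃L[ℝ] E3).contDiff).comp hc

end HopfAux

/-- the Ruf–Srikanth reduction via the Hopf map ℝ⁴ → ℝ³. -/
theorem stmt_7 (U : Set (EuclideanSpace ℝ (Fin 3))) (hU : IsSmoothDomain U)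
    (h0 : (0 : EuclideanSpace ℝ (Fin 3)) ∉ closure U) (a : ℝ)
    (f : ℝ → ℝ) (hf : Continuous f) :
    (∀ v : EuclideanSpace ℝ (Fin 3) → ℝ,
      ContDiffOn ℝ 2 v U → ContinuousOn v (closure U) →
      (∀ x ∈ U, - lap v x + (a / (4 * ‖x‖)) * v x = (1 / (4 * ‖x‖)) * f (v x)) →
      (∀ x ∈ frontier U, v x = 0) →
        (ContDiffOn ℝ 2 (v ∘ hopfC) (hopfC ⁻¹' U) ∧
         ContinuousOn (v ∘ hopfC) (closure (hopfC ⁻¹' U)) ∧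
         (∀ z ∈ hopfC ⁻¹' U, - lap (v ∘ hopfC) z + a * (v ∘ hopfC) z = f ((v ∘ hopfC) z)) ∧
         (∀ z ∈ frontier (hopfC ⁻¹' U), (v ∘ hopfC) z = 0))) ∧
    (∀ v : EuclideanSpace ℝ (Fin 3) → ℝ, ContDiffOn ℝ 2 v U →
      (∀ z ∈ hopfC ⁻¹' U, - lap (v ∘ hopfC) z + a * (v ∘ hopfC) z = f ((v ∘ hopfC) z)) →
      ∀ x ∈ U, - lap v x + (a / (4 * ‖x‖)) * v x = (1 / (4 * ‖x‖)) * f (v x)) := by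
  have hUopen := hU.isOpen
  have hnorm_ne : ∀ x ∈ U, (4 * ‖x‖ : ℝ) ≠ 0 := by
    intro x hx
    have hx0 : x ≠ 0 := fun h => h0 (h ▸ subset_closure hx)
    exact mul_ne_zero (by norm_num) (norm_ne_zero_iff.2 hx0)
  constructor
  · intro v hv2 hvc hpde hbd
    refine ⟨hv2.comp contDiff_hopfC.contDiffOn (fun z hz => hz), ?_, ?_, ?_⟩
    · exact hvc.comp contDiff_hopfC.continuous.continuousOn
        (fun z hz => contDiff_hopfC.continuous.closure_preimage_subset U hz)
    · intro z hz
      have hx : hopfC z ∈ U := hz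
      have hl := lap_comp v U hUopen hv2 z hx
      have hnz := hnorm_ne _ hx
      have hp := hpde (hopfC z) hx
      simp only [Function.comp_apply]
      rw [hl, show (‖z‖:ℝ)^2 = ‖hopfC z‖ from (norm_hopfC z).symm]
      have hn : ‖hopfC z‖ ≠ 0 := fun h => hnz (by rw [h]; ring)
      field_simp at hp ⊢
      linarith
    · intro z hz
      exact hbd _ (contDiff_hopfC.continuous.frontier_preimage_subset U hz)
  · intro v hv2 hpde x hx
    obtain ⟨z, rfl⟩ := hopfC_surjective x
    have hz : z ∈ hopfC ⁻¹' U := hx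
    have hp := hpde z hz
    have hl := lap_comp v U hUopen hv2 z hx
    have hnz := hnorm_ne _ hx
    simp only [Function.comp_apply] at hp
    rw [hl, show (‖z‖:ℝ)^2 = ‖hopfC z‖ from (norm_hopfC z).symm] at hp
    have hn : ‖hopfC z‖ ≠ 0 := fun h => hnz (by rw [h]; ring)
    field_simp at hp ⊢
    linarith
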